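/- If G is a finite tree (a connected acyclic simple graph) with at least two vertices, then the set L of its leaves (vertices of degree 1) is a Φ_c-valid control set. -/

import Mathlib

open Finset

variable {V : Type*}

/-- Agreement of a configuration on an (unordered) edge. -/
def agreeFun (x : V → Bool) : Sym2 V → Bool :=
  Sym2.lift ⟨fun a b => x a == x b, fun a b => by show (x a == x b) = (x b == x a); cases x a <;> cases x b <;> rfl⟩

/-- The potential of the majority game: number of edges whose endpoints agree. -/
def Phi [Fintype V] [DecidableEq V] (G : SimpleGraph V) [DecidableRel G.Adj]
    (x : V → Bool) : ℕ :=
  (G.edgeFinset.filter (fun e => agreeFun x e = true)).card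

/-- Number of neighbors of `i` playing action `a` in configuration `x`. -/
def nCount [Fintype V] (G : SimpleGraph V) [DecidableRel G.Adj]
    (x : V → Bool) (i : V) (a : Bool) : ℕ :=
  ((G.neighborFinset i).filter (fun j => x j = a)).card

/-- Majority-game utility: number of neighbors agreeing with `i`. -/
def lamC [Fintype V] (G : SimpleGraph V) [DecidableRel G.Adj]
    (x : V → Bool) (i : V) : ℕ :=
  ((G.neighborFinset i).filter (fun j => x j = x i)).card

/-- Minority-game utility: number of neighbors disagreeing with `i`. -/
def lamA [Fintype V] (G : SimpleGraph V) [DecidableRel G.Adj]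
    (x : V → Bool) (i : V) : ℕ :=
  ((G.neighborFinset i).filter (fun j => x j ≠ x i)).card

/-- `x` is a Nash equilibrium of the minority game. -/
def MinorityNE [Fintype V] [DecidableEq V] (G : SimpleGraph V) [DecidableRel G.Adj]
    (x : V → Bool) : Prop :=
  ∀ (i : V) (a : Bool), lamA G (Function.update x i a) i ≤ lamA G x i

/-- A monotone crusade from `C`: starts at the indicator of `C`, ends at all-ones,
and at each step one coordinate outside `C` is flipped from `0` to `1`. -/
def IsCrusade [DecidableEq V] (C : Finset V) (m : ℕ) (xs : ℕ → V → Bool) : Prop :=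
  xs 0 = (fun v => decide (v ∈ C)) ∧ xs m = (fun _ => true) ∧
    ∀ k < m, ∃ i, i ∉ C ∧ xs k i = false ∧ xs (k + 1) = Function.update (xs k) i true

/-- `C` is a `Φ_c`-valid control set: there is a `Φ_c`-adapted monotone crusade from `C`. -/
def ValidControlSet [Fintype V] [DecidableEq V] (G : SimpleGraph V) [DecidableRel G.Adj]
    (C : Finset V) : Prop :=
  ∃ m xs, IsCrusade C m xs ∧ ∀ k < m, Phi G (xs k) ≤ Phi G (xs (k + 1))

/-- `x ∈ Z`: reachable from the all-ones configuration by allowed down-flips. -/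
def InZ [Fintype V] [DecidableEq V] (G : SimpleGraph V) [DecidableRel G.Adj]
    (x : V → Bool) : Prop :=
  ∃ m, ∃ ys : ℕ → V → Bool, ys 0 = (fun _ => true) ∧ ys m = x ∧
    ∀ k < m, ∃ i, ys k i = true ∧ nCount G (ys k) i false ≤ nCount G (ys k) i true ∧
      ys (k + 1) = Function.update (ys k) i false

/-- `‖x‖₁`: number of coordinates equal to `1`. -/
def norm1 [Fintype V] (x : V → Bool) : ℕ :=
  (Finset.univ.filter (fun v => x v = true)).card

lemma agree_mk (x : V → Bool) (a b : V) : agreeFun x s(a, b) = (x a == x b) := rfl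

lemma card_incident_agree [Fintype V] [DecidableEq V] (G : SimpleGraph V) [DecidableRel G.Adj]
    (x : V → Bool) (i : V) :
    (G.edgeFinset.filter (fun e => i ∈ e ∧ agreeFun x e = true)).card = nCount G x i (x i) := by
  rw [nCount]
  symm
  refine Finset.card_bij (fun j _ => s(i, j)) ?_ ?_ ?_
  · intro j hj
    simp only [Finset.mem_filter, SimpleGraph.mem_neighborFinset] at hj
    simp only [Finset.mem_filter, SimpleGraph.mem_edgeFinset, SimpleGraph.mem_edgeSet]
    refine ⟨hj.1, Sym2.mem_mk_left i j, ?_⟩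
    rw [agree_mk, hj.2]
    simp
  · intro a _ b _ h
    exact Sym2.congr_right.mp h
  · rintro e he
    simp only [Finset.mem_filter, SimpleGraph.mem_edgeFinset, SimpleGraph.mem_edgeSet] at he
    obtain ⟨hadj, hi, hagree⟩ := he
    induction e using Sym2.ind with
    | _ a b =>
      rcases Sym2.mem_iff.mp hi with rfl | rfl
      · refine ⟨b, ?_, rfl⟩
        simp only [Finset.mem_filter, SimpleGraph.mem_neighborFinset]
        rw [agree_mk] at hagree
        exact ⟨hadj, (beq_iff_eq.mp hagree).symm⟩
      · refine ⟨a, ?_, ?_⟩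
        · simp only [Finset.mem_filter, SimpleGraph.mem_neighborFinset]
          rw [agree_mk] at hagree
          exact ⟨hadj.symm, beq_iff_eq.mp hagree⟩
        · exact Sym2.eq_swap

lemma phi_split [Fintype V] [DecidableEq V] (G : SimpleGraph V) [DecidableRel G.Adj]
    (x : V → Bool) (i : V) :
    Phi G x = (G.edgeFinset.filter (fun e => i ∉ e ∧ agreeFun x e = true)).card
      + nCount G x i (x i) := by
  rw [Phi, ← card_incident_agree G x i]
  rw [← Finset.card_filter_add_card_filter_not (s := G.edgeFinset.filter (fun e => agreeFun x e = true)) (p := fun e => i ∉ e)]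
  rw [Finset.filter_filter, Finset.filter_filter]
  congr 1
  · congr 1; ext e; simp only [Finset.mem_filter]; tauto
  · congr 1; ext e; simp only [Finset.mem_filter]; tauto

lemma phi_update_le [Fintype V] [DecidableEq V] (G : SimpleGraph V) [DecidableRel G.Adj]
    (x : V → Bool) (i : V) (hxi : x i = false)
    (h : nCount G x i false ≤ nCount G x i true) :
    Phi G x ≤ Phi G (Function.update x i true) := by
  rw [phi_split G x i, phi_split G (Function.update x i true) i]
  have h1 : (G.edgeFinset.filter (fun e => i ∉ e ∧ agreeFun (Function.update x i true) e = true))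
      = (G.edgeFinset.filter (fun e => i ∉ e ∧ agreeFun x e = true)) := by
    apply Finset.filter_congr
    intro e _
    induction e using Sym2.ind with
    | _ a b =>
      simp only [Sym2.mem_iff, agree_mk]
      constructor
      · rintro ⟨hne, hag⟩
        refine ⟨hne, ?_⟩
        rwa [Function.update_of_ne (fun h => hne (Or.inl h.symm)), Function.update_of_ne (fun h => hne (Or.inr h.symm))] at hag
      · rintro ⟨hne, hag⟩
        refine ⟨hne, ?_⟩
        rwa [Function.update_of_ne (fun h => hne (Or.inl h.symm)), Function.update_of_ne (fun h => hne (Or.inr h.symm))]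
  rw [h1]
  apply Nat.add_le_add_left
  have h2 : ∀ a, nCount G (Function.update x i true) i a = nCount G x i a := by
    intro a
    unfold nCount
    congr 1
    apply Finset.filter_congr
    intro j hj
    rw [SimpleGraph.mem_neighborFinset] at hj
    rw [Function.update_of_ne hj.ne']
  rw [hxi, Function.update_self, h2]
  exact h


lemma dist_le_of_mem_support [DecidableEq V] {G : SimpleGraph V} {r u v : V}
    (p : G.Walk r u) (hv : v ∈ p.support) : G.dist r v ≤ p.length :=
  le_trans (SimpleGraph.dist_le (p.takeUntil v hv)) (SimpleGraph.Walk.length_takeUntil_le p hv)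

lemma dist_lt_of_mem_support [DecidableEq V] {G : SimpleGraph V} {r u v : V}
    (p : G.Walk r u) (hv : v ∈ p.support) (hne : v ≠ u) : G.dist r v < p.length := by
  have hsplit := SimpleGraph.Walk.take_spec p hv
  have hlen : (p.takeUntil v hv).length + (p.dropUntil v hv).length = p.length := by
    rw [← SimpleGraph.Walk.length_append, hsplit]
  have hdrop : (p.dropUntil v hv).length ≠ 0 := fun h0 =>
    hne (SimpleGraph.Walk.eq_of_length_eq_zero h0)
  have := SimpleGraph.dist_le (p.takeUntil v hv)
  omega

lemma dist_ne_of_adj [DecidableEq V] {G : SimpleGraph V} (hconn : G.Connected)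
    (hacyc : G.IsAcyclic) (r : V) {u v : V} (h : G.Adj u v) :
    G.dist r u ≠ G.dist r v := by
  intro heq
  obtain ⟨p, hp, hplen⟩ := (hconn.preconnected r u).exists_path_of_dist
  obtain ⟨q, hq, hqlen⟩ := (hconn.preconnected r v).exists_path_of_dist
  have hvp : v ∉ p.support := by
    intro hv
    have := dist_lt_of_mem_support p hv h.ne'
    omega
  -- two distinct paths from v to r
  have hpath1 : (SimpleGraph.Walk.cons h.symm p.reverse).IsPath := by
    apply SimpleGraph.Walk.IsPath.cons hp.reverse
    rwa [SimpleGraph.Walk.support_reverse, List.mem_reverse]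
  have h2 := hacyc.path_unique ⟨SimpleGraph.Walk.cons h.symm p.reverse, hpath1⟩ ⟨q.reverse, hq.reverse⟩
  have hlen := congrArg (fun w : G.Path v r => w.val.length) h2
  simp only [SimpleGraph.Walk.length_cons, SimpleGraph.Walk.length_reverse] at hlen
  omega

lemma lower_nbr_unique [DecidableEq V] {G : SimpleGraph V} (hconn : G.Connected)
    (hacyc : G.IsAcyclic) (r : V) {v u₁ u₂ : V} (h₁ : G.Adj v u₁) (h₂ : G.Adj v u₂)
    (hd₁ : G.dist r u₁ < G.dist r v) (hd₂ : G.dist r u₂ < G.dist r v) : u₁ = u₂ := by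
  obtain ⟨p₁, hp₁, hl₁⟩ := (hconn.preconnected r u₁).exists_path_of_dist
  obtain ⟨p₂, hp₂, hl₂⟩ := (hconn.preconnected r u₂).exists_path_of_dist
  have hv₁ : v ∉ p₁.support := fun hv => absurd (dist_le_of_mem_support p₁ hv) (by omega)
  have hv₂ : v ∉ p₂.support := fun hv => absurd (dist_le_of_mem_support p₂ hv) (by omega)
  have hq₁ : (SimpleGraph.Walk.cons h₁ p₁.reverse).IsPath := by
    apply SimpleGraph.Walk.IsPath.cons hp₁.reverse
    rwa [SimpleGraph.Walk.support_reverse, List.mem_reverse]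
  have hq₂ : (SimpleGraph.Walk.cons h₂ p₂.reverse).IsPath := by
    apply SimpleGraph.Walk.IsPath.cons hp₂.reverse
    rwa [SimpleGraph.Walk.support_reverse, List.mem_reverse]
  have h2 := hacyc.path_unique ⟨SimpleGraph.Walk.cons h₁ p₁.reverse, hq₁⟩
    ⟨SimpleGraph.Walk.cons h₂ p₂.reverse, hq₂⟩
  have hsupp := congrArg (fun w : G.Path v r => w.val.support) h2
  simp only [SimpleGraph.Walk.support_cons] at hsupp
  have h3 : p₁.reverse.support = p₂.reverse.support := List.cons_injective hsupp
  have h4 : u₁ :: p₁.reverse.support.tail = u₂ :: p₂.reverse.support.tail := by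
    rw [← SimpleGraph.Walk.support_eq_cons, ← SimpleGraph.Walk.support_eq_cons, h3]
  injection h4


lemma exists_adj_of_conn [Fintype V] {G : SimpleGraph V} (hconn : G.Connected)
    (hn : 2 ≤ Fintype.card V) (v : V) : ∃ u, G.Adj v u := by
  obtain ⟨w, hw⟩ := Fintype.exists_ne_of_one_lt_card (by omega) v
  obtain ⟨p⟩ := hconn.preconnected v w
  cases p with
  | nil => exact absurd rfl hw
  | cons h q => exact ⟨_, h⟩

lemma exists_upper_nbr [Fintype V] [DecidableEq V] {G : SimpleGraph V} [DecidableRel G.Adj]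
    (hconn : G.Connected) (hacyc : G.IsAcyclic) (hn : 2 ≤ Fintype.card V) (r v : V)
    (hv : G.degree v ≠ 1) : ∃ u, G.Adj v u ∧ G.dist r v < G.dist r u := by
  classical
  set Nlt := (G.neighborFinset v).filter (fun u => G.dist r u < G.dist r v) with hNlt
  set Ngt := (G.neighborFinset v).filter (fun u => G.dist r v < G.dist r u) with hNgt
  have hcardlt : Nlt.card ≤ 1 := by
    apply Finset.card_le_one.mpr
    intro a ha b hb
    simp only [hNlt, Finset.mem_filter, SimpleGraph.mem_neighborFinset] at ha hb
    exact lower_nbr_unique hconn hacyc r ha.1 hb.1 ha.2 hb.2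
  have hunion : G.neighborFinset v = Nlt ∪ Ngt := by
    ext u
    simp only [hNlt, hNgt, Finset.mem_union, Finset.mem_filter, SimpleGraph.mem_neighborFinset]
    constructor
    · intro hu
      have := dist_ne_of_adj hconn hacyc r hu
      rcases lt_or_gt_of_ne this with h | h
      · exact Or.inr ⟨hu, h⟩
      · exact Or.inl ⟨hu, h⟩
    · rintro (⟨hu, _⟩ | ⟨hu, _⟩) <;> exact hu
  have hdeg2 : 2 ≤ G.degree v := by
    obtain ⟨u, hu⟩ := exists_adj_of_conn hconn hn v
    have h1 : 1 ≤ G.degree v := by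
      rw [← SimpleGraph.card_neighborFinset_eq_degree]
      exact Finset.card_pos.mpr ⟨u, (SimpleGraph.mem_neighborFinset G v u).mpr hu⟩
    omega
  have : G.degree v ≤ Nlt.card + Ngt.card := by
    rw [← SimpleGraph.card_neighborFinset_eq_degree, hunion]
    exact Finset.card_union_le _ _
  have hpos : 0 < Ngt.card := by omega
  obtain ⟨u, hu⟩ := Finset.card_pos.mp hpos
  simp only [hNgt, Finset.mem_filter, SimpleGraph.mem_neighborFinset] at hu
  exact ⟨u, hu.1, hu.2⟩


/-- in a finite tree with at least two vertices, the set of leaves is a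
`Φ_c`-valid control set. -/
theorem tree_leaves_valid [Fintype V] [DecidableEq V]
    (G : SimpleGraph V) [DecidableRel G.Adj]
    (hconn : G.Connected) (hacyc : G.IsAcyclic) (hn : 2 ≤ Fintype.card V) :
    ValidControlSet G (Finset.univ.filter (fun v => G.degree v = 1)) := by
  classical
  obtain ⟨r⟩ : Nonempty V := Fintype.card_pos_iff.mp (by omega)
  set l : List V := ((Finset.univ.filter (fun v => ¬ G.degree v = 1)).toList).mergeSort
      (fun u v => decide (G.dist r v ≤ G.dist r u)) with hldef
  have hperm : l.Perm (Finset.univ.filter (fun v => ¬ G.degree v = 1)).toList :=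
    List.mergeSort_perm _ _
  have hnodup : l.Nodup := hperm.nodup_iff.mpr (Finset.nodup_toList _)
  have hmem : ∀ v, v ∈ l ↔ ¬ G.degree v = 1 := by
    intro v
    rw [hperm.mem_iff, Finset.mem_toList, Finset.mem_filter]
    simp
  have hsorted : ∀ (a b : Fin l.length), a < b → G.dist r (l.get b) ≤ G.dist r (l.get a) := by
    have h := List.pairwise_mergeSort (le := fun u v => decide (G.dist r v ≤ G.dist r u))
      (fun a b c hab hbc => by simp only [decide_eq_true_eq] at *; omega)
      (fun a b => by simpa using le_total (G.dist r b) (G.dist r a))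
      ((Finset.univ.filter (fun v => ¬ G.degree v = 1)).toList)
    rw [← hldef] at h
    have h2 := List.pairwise_iff_get.mp h
    intro a b hab
    simpa using h2 a b hab
  set m := l.length with hm
  set xs : ℕ → V → Bool := fun k v => (decide (G.degree v = 1) || decide (v ∈ l.take k))
    with hxs
  -- i at step k
  have h_not_take : ∀ (k : ℕ) (hk : k < m), l.get ⟨k, hk⟩ ∉ l.take k := by
    intro k hk hmem'
    rw [List.mem_take_iff_getElem] at hmem'
    obtain ⟨j, hj, hje⟩ := hmem'
    have hj' : j < m := lt_of_lt_of_le hj inf_le_right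
    have : (⟨j, hj'⟩ : Fin l.length) = ⟨k, hk⟩ := hnodup.get_inj_iff.mp (by
      rw [List.get_eq_getElem, List.get_eq_getElem]; exact hje)
    have : j = k := by simpa using this
    have : j < k := lt_of_lt_of_le hj inf_le_left
    omega
  have h_false : ∀ (k : ℕ) (hk : k < m), xs k (l.get ⟨k, hk⟩) = false := by
    intro k hk
    have h1 : ¬ G.degree (l.get ⟨k, hk⟩) = 1 := (hmem _).mp (List.get_mem l ⟨k, hk⟩)
    simp only [hxs, Bool.or_eq_false_iff, decide_eq_false_iff_not]
    exact ⟨h1, h_not_take k hk⟩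
  have h_step : ∀ (k : ℕ) (hk : k < m),
      xs (k + 1) = Function.update (xs k) (l.get ⟨k, hk⟩) true := by
    intro k hk
    funext v
    by_cases hvi : v = l.get ⟨k, hk⟩
    · rw [hvi, Function.update_self]
      have hmt : l.get ⟨k, hk⟩ ∈ l.take (k + 1) := by
        rw [List.mem_take_iff_getElem]
        exact ⟨k, lt_inf_iff.mpr ⟨by omega, hk⟩, (List.get_eq_getElem (l := l) (i := ⟨k, hk⟩)).symm⟩
      simp only [hxs, Bool.or_eq_true, decide_eq_true_eq]
      exact Or.inr hmt
    · rw [Function.update_of_ne hvi]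
      have : v ∈ l.take (k + 1) ↔ v ∈ l.take k := by
        rw [List.take_succ]
        have : l[k]? = some (l.get ⟨k, hk⟩) := by
          rw [List.getElem?_eq_getElem hk, List.get_eq_getElem]
        rw [this]
        simp only [List.mem_append, Option.toList_some, List.mem_singleton]
        exact or_iff_left hvi
      simp [hxs, this]
  have h_claim_true : ∀ (k : ℕ) (hk : k < m) (j : V), G.Adj (l.get ⟨k, hk⟩) j →
      G.dist r (l.get ⟨k, hk⟩) < G.dist r j → xs k j = true := by
    intro k hk j hadj hdist
    by_cases hleaf : G.degree j = 1
    · simp only [hxs, Bool.or_eq_true, decide_eq_true_eq]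
      exact Or.inl hleaf
    · obtain ⟨⟨mj, hmj⟩, rfl⟩ := List.mem_iff_get.mp ((hmem j).mpr hleaf)
      have hmjk : mj < k := by
        rcases lt_trichotomy mj k with h | h | h
        · exact h
        · exfalso
          have : l.get ⟨mj, hmj⟩ = l.get ⟨k, hk⟩ := by congr 1; simp [h]
          rw [this] at hadj
          exact G.loopless.irrefl _ hadj
        · exfalso
          have := hsorted ⟨k, hk⟩ ⟨mj, hmj⟩ (by simpa using h)
          omega
      have hmt : l.get ⟨mj, hmj⟩ ∈ l.take k := by
        rw [List.mem_take_iff_getElem]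
        exact ⟨mj, lt_inf_iff.mpr ⟨hmjk, hmj⟩, (List.get_eq_getElem (l := l) (i := ⟨mj, hmj⟩)).symm⟩
      simp only [hxs, Bool.or_eq_true, decide_eq_true_eq]
      exact Or.inr hmt
  have h_claim_false : ∀ (k : ℕ) (hk : k < m) (j : V), G.Adj (l.get ⟨k, hk⟩) j →
      xs k j = false → G.dist r j < G.dist r (l.get ⟨k, hk⟩) := by
    intro k hk j hadj hfalse
    simp only [hxs, Bool.or_eq_false_iff, decide_eq_false_iff_not] at hfalse
    obtain ⟨hleaf, htake⟩ := hfalse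
    obtain ⟨⟨mj, hmj⟩, rfl⟩ := List.mem_iff_get.mp ((hmem j).mpr hleaf)
    have hne := dist_ne_of_adj hconn hacyc r hadj
    have hkmj : k < mj := by
      rcases lt_trichotomy mj k with h | h | h
      · exfalso
        apply htake
        rw [List.mem_take_iff_getElem]
        exact ⟨mj, lt_inf_iff.mpr ⟨h, hmj⟩, (List.get_eq_getElem (l := l) (i := ⟨mj, hmj⟩)).symm⟩
      · exfalso
        have : l.get ⟨mj, hmj⟩ = l.get ⟨k, hk⟩ := by congr 1; simp [h]
        rw [this] at hadj
        exact G.loopless.irrefl _ hadj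
      · exact h
    have := hsorted ⟨k, hk⟩ ⟨mj, hmj⟩ (by simpa using hkmj)
    omega
  have h_count : ∀ (k : ℕ) (hk : k < m),
      nCount G (xs k) (l.get ⟨k, hk⟩) false ≤ nCount G (xs k) (l.get ⟨k, hk⟩) true := by
    intro k hk
    set i := l.get ⟨k, hk⟩ with hi
    have hle1 : nCount G (xs k) i false ≤ 1 := by
      have hsub : (G.neighborFinset i).filter (fun j => xs k j = false) ⊆
          (G.neighborFinset i).filter (fun j => G.dist r j < G.dist r i) := by
        intro j hj
        simp only [Finset.mem_filter, SimpleGraph.mem_neighborFinset] at hj ⊢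
        exact ⟨hj.1, h_claim_false k hk j hj.1 hj.2⟩
      have hc1 : ((G.neighborFinset i).filter (fun j => G.dist r j < G.dist r i)).card ≤ 1 := by
        apply Finset.card_le_one.mpr
        intro a ha b hb
        simp only [Finset.mem_filter, SimpleGraph.mem_neighborFinset] at ha hb
        exact lower_nbr_unique hconn hacyc r ha.1 hb.1 ha.2 hb.2
      exact le_trans (Finset.card_le_card hsub) hc1
    have hge1 : 1 ≤ nCount G (xs k) i true := by
      obtain ⟨u, hu, hdu⟩ := exists_upper_nbr hconn hacyc hn r i ((hmem i).mp (by rw [hi]; exact List.get_mem l ⟨k, hk⟩))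
      apply Finset.card_pos.mpr
      refine ⟨u, ?_⟩
      simp only [Finset.mem_filter, SimpleGraph.mem_neighborFinset]
      exact ⟨hu, h_claim_true k hk u hu hdu⟩
    omega
  refine ⟨m, xs, ⟨?_, ?_, ?_⟩, ?_⟩
  · funext v
    simp only [hxs, List.take_zero, List.not_mem_nil, decide_false, Bool.or_false]
    simp [Finset.mem_filter]
  · funext v
    by_cases hleaf : G.degree v = 1
    · simp [hxs, hleaf]
    · have : v ∈ l.take m := by rw [hm, List.take_length]; exact (hmem v).mpr hleaf
      simp [hxs, this]
  · intro k hk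
    refine ⟨l.get ⟨k, hk⟩, ?_, h_false k hk, h_step k hk⟩
    simp only [Finset.mem_filter, Finset.mem_univ, true_and]
    exact (hmem _).mp (List.get_mem l ⟨k, hk⟩)
  · intro k hk
    rw [h_step k hk]
    exact phi_update_le G (xs k) _ (h_false k hk) (h_count k hk)
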